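/- Let 0 < t ≤ 1 and let {x₁,…,x_n} be a t-orthogonal set in a non-archimedean normed space E over K. If z₁,…,z_n ∈ E satisfy ‖x_i − z_i‖ < t·‖x_i‖ for each i ∈ {1,…,n}, then ‖z_i‖ = ‖x_i‖ for each i and {z₁,…,z_n} is also t-orthogonal; in fact ‖λ₁z₁+⋯+λ_n z_n‖ = ‖λ₁x₁+⋯+λ_n x_n‖ for all λ₁,…,λ_n ∈ K. -/

import Mathlib

open Metric Set

noncomputable section

variable (K : Type) [NontriviallyNormedField K] [IsUltrametricDist K]

/-- A linear map is an `ε`-isometry if `(1+ε)⁻¹ < ‖f x‖ < 1+ε` whenever `‖x‖ = 1`. -/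
def IsEpsIsometry {E F : Type} [NormedAddCommGroup E] [NormedAddCommGroup F]
    [NormedSpace K E] [NormedSpace K F] (ε : ℝ) (f : E →ₗ[K] F) : Prop :=
  ∀ x : E, ‖x‖ = 1 → (1 + ε)⁻¹ < ‖f x‖ ∧ ‖f x‖ < 1 + ε

/-- A non-archimedean Banach space `E` over `K` is of almost universal disposition for the
class `U_FNA` of all finite-dimensional non-archimedean normed spaces over `K`. -/
def IsAUD (E : Type) [NormedAddCommGroup E] [NormedSpace K E] : Prop :=
  ∀ (Y : Type) [NormedAddCommGroup Y] [NormedSpace K Y] [IsUltrametricDist Y]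
    [FiniteDimensional K Y] (X : Submodule K E) (g : X →ₗ[K] Y),
    (∀ x : X, ‖g x‖ = ‖(x : E)‖) →
    ∀ ε : ℝ, 0 < ε → ε < 1 →
      ∃ f : Y →ₗ[K] E, IsEpsIsometry K ε f ∧ ∀ x : X, f (g (x : X)) = (x : E)

/-- `E` is of universal disposition for the class `U_FNA`. -/
def IsUD (E : Type) [NormedAddCommGroup E] [NormedSpace K E] : Prop :=
  ∀ (Y : Type) [NormedAddCommGroup Y] [NormedSpace K Y] [IsUltrametricDist Y]
    [FiniteDimensional K Y] (X : Submodule K E) (j : X →ₗ[K] Y),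
    (∀ x : X, ‖j x‖ = ‖(x : E)‖) →
      ∃ f : Y →ₗ[K] E, (∀ y : Y, ‖f y‖ = ‖y‖) ∧ ∀ x : X, f (j (x : X)) = (x : E)

/-- A normed space is of countable type if it contains a countable subset whose linear
span is dense. -/
def CountableType (E : Type) [NormedAddCommGroup E] [NormedSpace K E] : Prop :=
  ∃ S : Set E, S.Countable ∧ Dense ((Submodule.span K S : Submodule K E) : Set E)

/-- A metric space is spherically complete if every nested sequence of closed balls has
non-empty intersection. -/
def SphComplete (α : Type) [MetricSpace α] : Prop :=
  ∀ (c : ℕ → α) (r : ℕ → ℝ), (∀ n, 0 ≤ r n) →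
    (∀ n, closedBall (c (n + 1)) (r (n + 1)) ⊆ closedBall (c n) (r n)) →
    (⋂ n, closedBall (c n) (r n)).Nonempty

/-- The set of non-zero norm values of a normed space (e.g. the value group `|K*|`). -/
def NormValues (E : Type) [NormedAddCommGroup E] : Set ℝ :=
  {t : ℝ | ∃ x : E, x ≠ 0 ∧ ‖x‖ = t}

/-- `K` is densely valued: `|K*|` is a dense subset of `(0,∞)`. -/
def DenselyValued : Prop :=
  Ioi (0 : ℝ) ⊆ closure (NormValues K)

end
variable (K : Type) [NontriviallyNormedField K] in
/-- A family `x : ι → E` is `t`-orthogonal if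
`‖∑_{i∈J} λ_i x_i‖ ≥ t · max_{i∈J} ‖λ_i x_i‖` for every finite `J` and all scalars. -/
def TOrth {E : Type} [NormedAddCommGroup E] [NormedSpace K E] (t : ℝ) {ι : Type}
    (x : ι → E) : Prop :=
  ∀ (J : Finset ι) (lam : ι → K), ∀ i ∈ J, t * ‖lam i • x i‖ ≤ ‖∑ j ∈ J, lam j • x j‖

/-- Perturbing a `t`-orthogonal set `{x_1,…,x_n}` by vectors `z_i` with
`‖x_i − z_i‖ < t‖x_i‖` preserves norms, `t`-orthogonality, and even the norms of all
linear combinations. -/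
theorem tOrth_of_close (K : Type) [NontriviallyNormedField K] [IsUltrametricDist K]
    (E : Type) [NormedAddCommGroup E] [NormedSpace K E] [IsUltrametricDist E]
    (t : ℝ) (ht0 : 0 < t) (ht1 : t ≤ 1) (n : ℕ) (x z : Fin n → E)
    (hx : TOrth K t x) (hclose : ∀ i, ‖x i - z i‖ < t * ‖x i‖) :
    (∀ i, ‖z i‖ = ‖x i‖) ∧ TOrth K t z ∧
      ∀ lam : Fin n → K, ‖∑ i, lam i • z i‖ = ‖∑ i, lam i • x i‖ := by
  -- each x i is nonzero
  have hxne : ∀ i, x i ≠ 0 := by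
    intro i h
    have := hclose i
    rw [h] at this
    simp only [norm_zero, mul_zero, zero_sub, norm_neg] at this
    exact absurd this (not_lt.2 (norm_nonneg _))
  -- key: equality of norms of all linear combinations over any finset
  have key : ∀ (J : Finset (Fin n)) (lam : Fin n → K),
      ‖∑ j ∈ J, lam j • z j‖ = ‖∑ j ∈ J, lam j • x j‖ := by
    intro J lam
    by_cases hall : ∀ j ∈ J, lam j = 0
    · rw [Finset.sum_congr rfl (fun j hj => by rw [hall j hj, zero_smul]),
        Finset.sum_congr rfl (fun j hj => by rw [hall j hj, zero_smul] :
          ∀ j ∈ J, lam j • x j = (0 : E))]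
    · push_neg at hall
      obtain ⟨i₀, hi₀J, hi₀⟩ := hall
      -- pick the index maximizing ‖lam i • x i‖
      have hJne : J.Nonempty := ⟨i₀, hi₀J⟩
      obtain ⟨i, hiJ, hi⟩ := J.exists_max_image (fun j => ‖lam j • x j‖) hJne
      have hpos : 0 < ‖lam i • x i‖ := by
        have : 0 < ‖lam i₀ • x i₀‖ := by
          rw [norm_smul]
          exact mul_pos (norm_pos_iff.2 hi₀) (norm_pos_iff.2 (hxne i₀))
        exact lt_of_lt_of_le this (hi i₀ hi₀J)
      have hb : t * ‖lam i • x i‖ ≤ ‖∑ j ∈ J, lam j • x j‖ := hx J lam i hiJ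
      have hbpos : 0 < ‖∑ j ∈ J, lam j • x j‖ := lt_of_lt_of_le (mul_pos ht0 hpos) hb
      -- bound the difference
      have hd : ‖∑ j ∈ J, lam j • (x j - z j)‖ < ‖∑ j ∈ J, lam j • x j‖ := by
        refine lt_of_le_of_lt (hJne.norm_sum_le_sup'_norm (fun j => lam j • (x j - z j))) ?_
        rw [Finset.sup'_lt_iff]
        intro j hj
        by_cases hlj : lam j = 0
        · simpa [hlj] using hbpos
        · have h1 : ‖lam j • (x j - z j)‖ < t * ‖lam j • x j‖ := by
            rw [norm_smul, norm_smul]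
            have := hclose j
            have hlj' : 0 < ‖lam j‖ := norm_pos_iff.2 hlj
            calc ‖lam j‖ * ‖x j - z j‖ < ‖lam j‖ * (t * ‖x j‖) :=
                  (mul_lt_mul_iff_right₀ hlj').2 (hclose j)
              _ = t * (‖lam j‖ * ‖x j‖) := by ring
          have h2 : t * ‖lam j • x j‖ ≤ t * ‖lam i • x i‖ :=
            (mul_le_mul_iff_right₀ ht0).2 (hi j hj)
          exact lt_of_lt_of_le h1 (le_trans h2 hb)
      calc ‖∑ j ∈ J, lam j • z j‖
          = ‖∑ j ∈ J, lam j • x j - ∑ j ∈ J, lam j • (x j - z j)‖ := by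
            congr 1
            rw [← Finset.sum_sub_distrib]
            exact Finset.sum_congr rfl fun j _ => by rw [smul_sub, sub_sub_cancel]
        _ = ‖∑ j ∈ J, lam j • x j‖ := by
            rw [sub_eq_add_neg]
            rw [IsUltrametricDist.norm_add_eq_max_of_norm_ne_norm]
            · rw [max_eq_left]
              rw [norm_neg]
              exact hd.le
            · rw [norm_neg]
              exact ne_of_gt hd
  have hnorm : ∀ i, ‖z i‖ = ‖x i‖ := by
    intro i
    have := key {i} (fun _ => 1)
    simpa using this
  refine ⟨hnorm, ?_, fun lam => key Finset.univ lam⟩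
  intro J lam i hiJ
  rw [key J lam, norm_smul, hnorm i, ← norm_smul]
  exact hx J lam i hiJ
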